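/- Let k ≥ 12 be even and let A be the ((k-4)/2) × ((k-4)/2) matrix over ℚ with entries A_{ij} = C(2j, 2i) - C(2j, k-2-2i) + δ(i+j = (k-2)/2), for 1 ≤ i,j ≤ (k-4)/2, where C denotes the binomial coefficient and δ is 1 if the condition holds and 0 otherwise. Let D be the diagonal matrix with D_{ii} = 1/C(k-2, 2i) and B the matrix with B_{ij} = C(2j, 2i). Then the matrix (transpose of A)·D·B is symmetric. -/

import Mathlib

open Matrix

lemma choose_cross {N a b : ℕ} (ha : a ≤ N) (hb : b ≤ N) :
    Nat.choose b (N - a) * Nat.choose N b = Nat.choose a (N - b) * Nat.choose N a := by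
  rcases le_or_gt (N - a) b with h | h
  · have h' : N - b ≤ a := by omega
    have e1 : Nat.choose N b * Nat.choose b (N - a)
        = Nat.choose N (N - a) * Nat.choose (N - (N - a)) (b - (N - a)) :=
      Nat.choose_mul h
    have e2 : N - (N - a) = a := by omega
    have e3 : b - (N - a) = a - (N - b) := by omega
    have e4 : Nat.choose N (N - a) = Nat.choose N a := Nat.choose_symm ha
    have e5 : Nat.choose a (a - (N - b)) = Nat.choose a (N - b) := Nat.choose_symm h'
    rw [mul_comm (Nat.choose b (N - a)), e1, e2, e3, e4, e5, mul_comm]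
  · have h1 : Nat.choose b (N - a) = 0 := Nat.choose_eq_zero_of_lt h
    have h2 : Nat.choose a (N - b) = 0 := Nat.choose_eq_zero_of_lt (by omega)
    simp [h1, h2]

theorem tADB_symmetric
    (k : ℕ) (hk : 12 ≤ k) (hke : Even k)
    (A D B : Matrix (Fin ((k - 4) / 2)) (Fin ((k - 4) / 2)) ℚ)
    (hA : ∀ i j : Fin ((k - 4) / 2),
      A i j = (Nat.choose (2 * (j.1 + 1)) (2 * (i.1 + 1)) : ℚ)
        - (Nat.choose (2 * (j.1 + 1)) (k - 2 - 2 * (i.1 + 1)) : ℚ)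
        + (if (i.1 + 1) + (j.1 + 1) = (k - 2) / 2 then 1 else 0))
    (hD : D = Matrix.diagonal (fun i : Fin ((k - 4) / 2) =>
      ((Nat.choose (k - 2) (2 * (i.1 + 1)) : ℚ))⁻¹))
    (hB : ∀ i j : Fin ((k - 4) / 2),
      B i j = (Nat.choose (2 * (j.1 + 1)) (2 * (i.1 + 1)) : ℚ)) :
    (Aᵀ * D * B).IsSymm := by
  obtain ⟨n, hn⟩ : ∃ n, k = 2 * n + 4 := ⟨(k - 4) / 2, by obtain ⟨m, hm⟩ := hke; omega⟩
  have hdiv : (k - 4) / 2 = n := by omega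
  rw [Matrix.IsSymm]
  ext i j
  rw [Matrix.transpose_apply]
  have entry : ∀ x y : Fin ((k - 4) / 2), (Aᵀ * D * B) x y
      = ∑ l : Fin ((k - 4) / 2), ((Nat.choose (2 * (x.1 + 1)) (2 * (l.1 + 1)) : ℚ)
          * ((Nat.choose (k - 2) (2 * (l.1 + 1)) : ℚ))⁻¹
          * (Nat.choose (2 * (y.1 + 1)) (2 * (l.1 + 1)) : ℚ)
        - (Nat.choose (2 * (x.1 + 1)) (k - 2 - 2 * (l.1 + 1)) : ℚ)
          * ((Nat.choose (k - 2) (2 * (l.1 + 1)) : ℚ))⁻¹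
          * (Nat.choose (2 * (y.1 + 1)) (2 * (l.1 + 1)) : ℚ)
        + (if (l.1 + 1) + (x.1 + 1) = (k - 2) / 2 then 1 else 0)
          * ((Nat.choose (k - 2) (2 * (l.1 + 1)) : ℚ))⁻¹
          * (Nat.choose (2 * (y.1 + 1)) (2 * (l.1 + 1)) : ℚ)) := by
    intro x y
    rw [hD, Matrix.mul_apply]
    refine Finset.sum_congr rfl fun l _ => ?_
    rw [Matrix.mul_diagonal, Matrix.transpose_apply, hA, hB]
    ring
  rw [entry i j, entry j i]
  rw [Finset.sum_add_distrib, Finset.sum_add_distrib,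
    Finset.sum_sub_distrib, Finset.sum_sub_distrib]
  -- the delta sums evaluate to a single term
  have edelta : ∀ x y : Fin ((k - 4) / 2),
      (∑ l : Fin ((k - 4) / 2), (if (l.1 + 1) + (x.1 + 1) = (k - 2) / 2 then (1 : ℚ) else 0)
          * ((Nat.choose (k - 2) (2 * (l.1 + 1)) : ℚ))⁻¹
          * (Nat.choose (2 * (y.1 + 1)) (2 * (l.1 + 1)) : ℚ))
      = ((Nat.choose (k - 2) (2 * (x.1 + 1)) : ℚ))⁻¹
          * (Nat.choose (2 * (y.1 + 1)) (k - 2 - 2 * (x.1 + 1)) : ℚ) := by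
    intro x y
    have hx : x.1 < n := by have := x.2; omega
    set l₀ : Fin ((k - 4) / 2) := ⟨n - 1 - x.1, by omega⟩ with hl₀
    have h2l : 2 * (l₀.1 + 1) = k - 2 - 2 * (x.1 + 1) := by
      simp only [hl₀]; omega
    have hcs : Nat.choose (k - 2) (k - 2 - 2 * (x.1 + 1)) = Nat.choose (k - 2) (2 * (x.1 + 1)) :=
      Nat.choose_symm (by omega)
    have : ∀ l : Fin ((k - 4) / 2),
        (if (l.1 + 1) + (x.1 + 1) = (k - 2) / 2 then (1 : ℚ) else 0)
          * ((Nat.choose (k - 2) (2 * (l.1 + 1)) : ℚ))⁻¹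
          * (Nat.choose (2 * (y.1 + 1)) (2 * (l.1 + 1)) : ℚ)
        = if l = l₀ then ((Nat.choose (k - 2) (2 * (l.1 + 1)) : ℚ))⁻¹
            * (Nat.choose (2 * (y.1 + 1)) (2 * (l.1 + 1)) : ℚ) else 0 := by
      intro l
      have hl : l.1 < n := by have := l.2; omega
      by_cases h : l = l₀
      · subst h
        rw [if_pos (by simp only [hl₀]; omega), if_pos rfl]
        ring
      · rw [if_neg, if_neg h]
        · ring
        · intro hc
          exact h (Fin.ext (by simp only [hl₀]; omega))
    calc (∑ l : Fin ((k - 4) / 2), (if (l.1 + 1) + (x.1 + 1) = (k - 2) / 2 then (1 : ℚ) else 0)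
          * ((Nat.choose (k - 2) (2 * (l.1 + 1)) : ℚ))⁻¹
          * (Nat.choose (2 * (y.1 + 1)) (2 * (l.1 + 1)) : ℚ))
        = ∑ l : Fin ((k - 4) / 2), (if l = l₀ then ((Nat.choose (k - 2) (2 * (l.1 + 1)) : ℚ))⁻¹
            * (Nat.choose (2 * (y.1 + 1)) (2 * (l.1 + 1)) : ℚ) else 0) :=
          Finset.sum_congr rfl fun l _ => this l
      _ = ((Nat.choose (k - 2) (2 * (l₀.1 + 1)) : ℚ))⁻¹
            * (Nat.choose (2 * (y.1 + 1)) (2 * (l₀.1 + 1)) : ℚ) := by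
          rw [Finset.sum_ite_eq' Finset.univ l₀]; simp
      _ = ((Nat.choose (k - 2) (2 * (x.1 + 1)) : ℚ))⁻¹
          * (Nat.choose (2 * (y.1 + 1)) (k - 2 - 2 * (x.1 + 1)) : ℚ) := by
          simp only [h2l, hcs]
  rw [edelta i j, edelta j i]
  -- the first sums are termwise symmetric
  have e1 : (∑ l : Fin ((k - 4) / 2), (Nat.choose (2 * (j.1 + 1)) (2 * (l.1 + 1)) : ℚ)
          * ((Nat.choose (k - 2) (2 * (l.1 + 1)) : ℚ))⁻¹
          * (Nat.choose (2 * (i.1 + 1)) (2 * (l.1 + 1)) : ℚ))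
      = ∑ l : Fin ((k - 4) / 2), (Nat.choose (2 * (i.1 + 1)) (2 * (l.1 + 1)) : ℚ)
          * ((Nat.choose (k - 2) (2 * (l.1 + 1)) : ℚ))⁻¹
          * (Nat.choose (2 * (j.1 + 1)) (2 * (l.1 + 1)) : ℚ) :=
    Finset.sum_congr rfl fun l _ => by ring
  -- the middle sums are symmetric via index reversal
  have e2 : (∑ l : Fin ((k - 4) / 2), (Nat.choose (2 * (j.1 + 1)) (k - 2 - 2 * (l.1 + 1)) : ℚ)
          * ((Nat.choose (k - 2) (2 * (l.1 + 1)) : ℚ))⁻¹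
          * (Nat.choose (2 * (i.1 + 1)) (2 * (l.1 + 1)) : ℚ))
      = ∑ l : Fin ((k - 4) / 2), (Nat.choose (2 * (i.1 + 1)) (k - 2 - 2 * (l.1 + 1)) : ℚ)
          * ((Nat.choose (k - 2) (2 * (l.1 + 1)) : ℚ))⁻¹
          * (Nat.choose (2 * (j.1 + 1)) (2 * (l.1 + 1)) : ℚ) := by
    refine Fintype.sum_bijective Fin.rev Fin.rev_involutive.bijective _ _ fun l => ?_
    have hl : l.1 < n := by have := l.2; omega
    have hrev : (Fin.rev l).1 = (k - 4) / 2 - (l.1 + 1) := rfl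
    have ha : 2 * ((Fin.rev l).1 + 1) = k - 2 - 2 * (l.1 + 1) := by
      rw [hrev]; omega
    have hb : k - 2 - 2 * ((Fin.rev l).1 + 1) = 2 * (l.1 + 1) := by
      rw [hrev]; omega
    have hcs : Nat.choose (k - 2) (k - 2 - 2 * (l.1 + 1)) = Nat.choose (k - 2) (2 * (l.1 + 1)) :=
      Nat.choose_symm (by omega)
    have hc : k - 2 - (k - 2 - 2 * (l.1 + 1)) = 2 * (l.1 + 1) := by omega
    simp only [ha, hc, hcs]
    ring
  rw [e1, e2]
  -- remaining: the delta closed forms agree, via the cross identity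
  have hi : i.1 < n := by have := i.2; omega
  have hj : j.1 < n := by have := j.2; omega
  have hcross := choose_cross (N := k - 2) (a := 2 * (i.1 + 1)) (b := 2 * (j.1 + 1))
    (by omega) (by omega)
  have hpos1 : (0 : ℚ) < (Nat.choose (k - 2) (2 * (i.1 + 1)) : ℚ) := by
    exact_mod_cast Nat.choose_pos (by omega)
  have hpos2 : (0 : ℚ) < (Nat.choose (k - 2) (2 * (j.1 + 1)) : ℚ) := by
    exact_mod_cast Nat.choose_pos (by omega)
  have hcq : (Nat.choose (2 * (j.1 + 1)) (k - 2 - 2 * (i.1 + 1)) : ℚ)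
        * (Nat.choose (k - 2) (2 * (j.1 + 1)) : ℚ)
      = (Nat.choose (2 * (i.1 + 1)) (k - 2 - 2 * (j.1 + 1)) : ℚ)
        * (Nat.choose (k - 2) (2 * (i.1 + 1)) : ℚ) := by
    exact_mod_cast hcross
  have hfin : ((Nat.choose (k - 2) (2 * (j.1 + 1)) : ℚ))⁻¹
        * (Nat.choose (2 * (i.1 + 1)) (k - 2 - 2 * (j.1 + 1)) : ℚ)
      = ((Nat.choose (k - 2) (2 * (i.1 + 1)) : ℚ))⁻¹
        * (Nat.choose (2 * (j.1 + 1)) (k - 2 - 2 * (i.1 + 1)) : ℚ) := by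
    field_simp
    linarith [hcq]
  linarith [hfin]
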